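/- Let n be a positive integer with n ≠ 4, and let G be either the symmetric group S_n or the alternating group A_n. If H is a subgroup of G of index m with m < n, then H equals A_n or S_n. -/

import Mathlib

open Equiv Equiv.Perm Subgroup
open scoped Nat

section Auxiliary

/-- The permutation groups of equivalent types are isomorphic. -/
private def permCongrMulEquiv {α β : Type*} (e : α ≃ β) : Perm α ≃* Perm β :=
  { Equiv.permCongr e with
    map_mul' := fun p q => by
      ext x
      simp [Equiv.permCongr_apply] }

private lemma alt_simple_of_card_five {β : Type*} [DecidableEq β] [Fintype β]
    (h5 : Fintype.card β = 5) : IsSimpleGroup (alternatingGroup β) := by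
  haveI : Nontrivial (alternatingGroup β) :=
    alternatingGroup.nontrivial_of_three_le_card (by rw [Nat.card_eq_fintype_card]; omega)
  obtain ⟨e⟩ : Nonempty (Fin 5 ≃ β) := ⟨(Fintype.equivFinOfCardEq h5).symm⟩
  set Φ := permCongrMulEquiv e with hΦ
  have hsign : ∀ g : Perm (Fin 5), Perm.sign (Φ g) = Perm.sign g := fun g =>
    Perm.sign_permCongr e g
  have hmem : ∀ g : alternatingGroup (Fin 5),
      Φ ((alternatingGroup (Fin 5)).subtype g) ∈ alternatingGroup β := by
    rintro ⟨g, hg⟩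
    rw [Equiv.Perm.mem_alternatingGroup] at hg ⊢
    simpa [hsign] using hg
  let f : alternatingGroup (Fin 5) →* alternatingGroup β :=
    MonoidHom.codRestrict (Φ.toMonoidHom.comp (alternatingGroup (Fin 5)).subtype) _ hmem
  have hsurj : Function.Surjective f := by
    rintro ⟨y, hy⟩
    have hy' : Φ.symm y ∈ alternatingGroup (Fin 5) := by
      rw [Equiv.Perm.mem_alternatingGroup] at hy ⊢
      have : Perm.sign (Φ (Φ.symm y)) = Perm.sign (Φ.symm y) := hsign _
      rwa [MulEquiv.apply_symm_apply, hy, eq_comm] at this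
    exact ⟨⟨Φ.symm y, hy'⟩, Subtype.ext (by simp [f])⟩
  exact IsSimpleGroup.isSimpleGroup_of_surjective f hsurj

private lemma threeCycle_aux {α : Type*} [Fintype α] [DecidableEq α] (p : α → Prop)
    [DecidablePred p]
    (hcard : Fintype.card (Subtype p) = 5) (N : Subgroup (Perm α))
    (hle : N ≤ alternatingGroup α)
    (hconj : ∀ g ∈ alternatingGroup α, ∀ x ∈ N, g * x * g⁻¹ ∈ N)
    (ρ : Perm α) (hρN : ρ ∈ N) (hρ1 : ρ ≠ 1)
    (hsupp : ∀ x, ¬ p x → ρ x = x) : ∃ f ∈ N, IsThreeCycle f := by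
  have hst : ∀ x, p x ↔ p (ρ x) := by
    intro x
    constructor
    · intro hx
      by_contra h
      have h2 : ρ (ρ x) = ρ x := hsupp _ h
      have h3 : ρ x = x := ρ.injective h2
      rw [h3] at h
      exact h hx
    · intro hx
      by_contra h
      rw [hsupp _ h] at hx
      exact h hx
  obtain ⟨ρ', hρ'def⟩ : ∃ ρ' : Perm (Subtype p), ρ' = ρ.subtypePerm (fun x => (hst x).symm) := ⟨_, rfl⟩
  have hofρ : Equiv.Perm.ofSubtype ρ' = ρ := by
    ext x
    by_cases hx : p x
    · rw [hρ'def]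
      exact Equiv.Perm.ofSubtype_subtypePerm_of_mem (fun x => (hst x).symm) hx
    · rw [hρ'def, Equiv.Perm.ofSubtype_subtypePerm_of_not_mem (fun x => (hst x).symm) hx]
      exact (hsupp x hx).symm
  haveI hsimp5 : IsSimpleGroup (alternatingGroup (Subtype p)) :=
    alt_simple_of_card_five hcard
  obtain ⟨M, hMdef⟩ : ∃ M : Subgroup (Perm (Subtype p)),
      M = N.comap (Equiv.Perm.ofSubtype (p := p)) := ⟨_, rfl⟩
  have hmemM : ∀ g : Perm (Subtype p), g ∈ M ↔ Equiv.Perm.ofSubtype g ∈ N := by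
    intro g; rw [hMdef]; exact Iff.rfl
  have hMnormal : (M.subgroupOf (alternatingGroup (Subtype p))).Normal := by
    constructor
    rintro ⟨x, hxA⟩ hx ⟨g, hgA⟩
    rw [Subgroup.mem_subgroupOf] at hx ⊢
    simp only [Subgroup.coe_mul, InvMemClass.coe_inv] at hx ⊢
    rw [hmemM] at hx ⊢
    rw [map_mul, map_mul, map_inv]
    refine hconj _ ?_ _ hx
    rw [Equiv.Perm.mem_alternatingGroup, Equiv.Perm.sign_ofSubtype]
    exact Equiv.Perm.mem_alternatingGroup.mp hgA
  have hρ'A : ρ' ∈ alternatingGroup (Subtype p) := by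
    rw [Equiv.Perm.mem_alternatingGroup, ← Equiv.Perm.sign_ofSubtype, hofρ]
    exact Equiv.Perm.mem_alternatingGroup.mp (hle hρN)
  have hMne : M.subgroupOf (alternatingGroup (Subtype p)) ≠ ⊥ := by
    rw [Subgroup.ne_bot_iff_exists_ne_one]
    refine ⟨⟨⟨ρ', hρ'A⟩, ?_⟩, ?_⟩
    · rw [Subgroup.mem_subgroupOf]
      show ρ' ∈ M
      rw [hmemM, hofρ]
      exact hρN
    · intro h
      apply hρ1
      rw [← hofρ]
      have h1 : ρ' = 1 := Subtype.ext_iff.mp (Subtype.ext_iff.mp h)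
      rw [h1, map_one]
  rcases hMnormal.eq_bot_or_eq_top with h | h
  · exact absurd h hMne
  have hAM : alternatingGroup (Subtype p) ≤ M := Subgroup.subgroupOf_eq_top.mp h
  obtain ⟨e5⟩ : Nonempty (Fin 5 ≃ Subtype p) := ⟨(Fintype.equivFinOfCardEq hcard).symm⟩
  have h01 : e5 0 ≠ e5 1 := by rw [e5.injective.ne_iff]; decide
  have h02 : e5 0 ≠ e5 2 := by rw [e5.injective.ne_iff]; decide
  have h12 : e5 1 ≠ e5 2 := by rw [e5.injective.ne_iff]; decide
  have hθ3 : IsThreeCycle (Equiv.swap (e5 0) (e5 1) * Equiv.swap (e5 0) (e5 2)) :=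
    isThreeCycle_swap_mul_swap_same h01 h02 h12
  have hθM : Equiv.swap (e5 0) (e5 1) * Equiv.swap (e5 0) (e5 2) ∈ M :=
    hAM hθ3.mem_alternatingGroup
  refine ⟨Equiv.Perm.ofSubtype (Equiv.swap (e5 0) (e5 1) * Equiv.swap (e5 0) (e5 2)),
    (hmemM _).mp hθM, ?_⟩
  rw [← card_support_eq_three_iff, Equiv.Perm.support_ofSubtype, Finset.card_map]
  exact hθ3.card_support

private lemma exists_threeCycle_mem {n : ℕ} (h5 : 5 ≤ n) (N : Subgroup (Perm (Fin n)))
    (hle : N ≤ alternatingGroup (Fin n))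
    (hconj : ∀ g ∈ alternatingGroup (Fin n), ∀ x ∈ N, g * x * g⁻¹ ∈ N)
    (hN : N ≠ ⊥) : ∃ f ∈ N, IsThreeCycle f := by
  obtain ⟨⟨σ, hσN⟩, hσ1⟩ := Subgroup.ne_bot_iff_exists_ne_one.mp hN
  have hσ1' : σ ≠ 1 := by simpa [Subtype.ext_iff] using hσ1
  obtain ⟨a, ha⟩ : ∃ a, σ a ≠ a := by
    by_contra h
    push_neg at h
    exact hσ1' (Equiv.ext h)
  obtain ⟨c, hc⟩ : ∃ c, c ∉ ({a, σ a, σ (σ a), σ⁻¹ a} : Finset (Fin n)) := by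
    by_contra h
    push_neg at h
    have hsub : (Finset.univ : Finset (Fin n)) ⊆ {a, σ a, σ (σ a), σ⁻¹ a} :=
      fun x _ => h x
    have hle4 := Finset.card_le_card hsub
    simp only [Finset.card_univ, Fintype.card_fin] at hle4
    have h4 : ({a, σ a, σ (σ a), σ⁻¹ a} : Finset (Fin n)).card ≤ 4 := by
      refine (Finset.card_insert_le _ _).trans (Nat.succ_le_succ ?_)
      refine (Finset.card_insert_le _ _).trans (Nat.succ_le_succ ?_)
      refine (Finset.card_insert_le _ _).trans (Nat.succ_le_succ ?_)
      simp
    omega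
  simp only [Finset.mem_insert, Finset.mem_singleton, not_or] at hc
  obtain ⟨hca, hcb, hcsb, hcia⟩ := hc
  have hab : a ≠ σ a := Ne.symm ha
  have hac : a ≠ c := fun h => hca h.symm
  obtain ⟨τ, hτdef⟩ : ∃ τ : Perm (Fin n), τ = Equiv.swap a (σ a) * Equiv.swap a c := ⟨_, rfl⟩
  have hτA : τ ∈ alternatingGroup (Fin n) := by
    rw [Equiv.Perm.mem_alternatingGroup, hτdef, map_mul,
      Equiv.Perm.sign_swap hab, Equiv.Perm.sign_swap hac]
    norm_num
  have hτa : τ a = c := by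
    rw [hτdef, Equiv.Perm.mul_apply, Equiv.swap_apply_left,
      Equiv.swap_apply_of_ne_of_ne hca hcb]
  have hτb : τ (σ a) = a := by
    rw [hτdef, Equiv.Perm.mul_apply,
      Equiv.swap_apply_of_ne_of_ne (Ne.symm hab) (fun h => hcb h.symm),
      Equiv.swap_apply_right]
  obtain ⟨ρ, hρdef⟩ : ∃ ρ : Perm (Fin n), ρ = τ * σ * τ⁻¹ * σ⁻¹ := ⟨_, rfl⟩
  have hρN : ρ ∈ N := hρdef ▸ mul_mem (hconj τ hτA σ hσN) (inv_mem hσN)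
  have hρ1 : ρ ≠ 1 := by
    intro h
    rw [hρdef, mul_inv_eq_one] at h
    have hcomm : τ * σ = σ * τ := by
      calc τ * σ = (τ * σ * τ⁻¹) * τ := by group
        _ = σ * τ := by rw [h]
    have h3 := Equiv.ext_iff.mp hcomm a
    rw [Equiv.Perm.mul_apply, Equiv.Perm.mul_apply, hτb, hτa] at h3
    have h4 : c = σ⁻¹ a := by rw [h3]; simp
    exact hcia h4
  have hsuppτ : τ.support ⊆ {a, σ a, c} := by
    rw [hτdef]
    refine (Equiv.Perm.support_mul_le _ _).trans ?_
    rw [Equiv.Perm.support_swap hab, Equiv.Perm.support_swap hac]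
    intro x hx
    simp only [Finset.sup_eq_union, Finset.mem_union, Finset.mem_insert,
      Finset.mem_singleton] at hx ⊢
    tauto
  have hsupp : ρ.support ⊆ {a, σ a, c, σ (σ a), σ c} := by
    rw [hρdef, show τ * σ * τ⁻¹ * σ⁻¹ = τ * (σ * τ⁻¹ * σ⁻¹) by group]
    refine (Equiv.Perm.support_mul_le _ _).trans (sup_le ?_ ?_)
    · refine hsuppτ.trans ?_
      intro x hx
      simp only [Finset.mem_insert, Finset.mem_singleton] at hx ⊢
      tauto
    · rw [Equiv.Perm.support_conj, Equiv.Perm.support_inv]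
      intro x hx
      rw [Finset.mem_map] at hx
      obtain ⟨y, hy, rfl⟩ := hx
      have hy' := hsuppτ hy
      simp only [Finset.mem_insert, Finset.mem_singleton] at hy' ⊢
      simp only [Equiv.toEmbedding_apply]
      rcases hy' with rfl | rfl | rfl
      · right; left; rfl
      · right; right; right; left; rfl
      · right; right; right; right; rfl
  have hcard0 : ({a, σ a, c, σ (σ a), σ c} : Finset (Fin n)).card ≤ 5 := by
    refine (Finset.card_insert_le _ _).trans (Nat.succ_le_succ ?_)
    refine (Finset.card_insert_le _ _).trans (Nat.succ_le_succ ?_)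
    refine (Finset.card_insert_le _ _).trans (Nat.succ_le_succ ?_)
    refine (Finset.card_insert_le _ _).trans (Nat.succ_le_succ ?_)
    simp
  obtain ⟨T, hT0T, -, hTcard⟩ :=
    Finset.exists_subsuperset_card_eq
      (Finset.subset_univ ({a, σ a, c, σ (σ a), σ c} : Finset (Fin n))) hcard0
      (by simpa using h5)
  have hTsupp : ρ.support ⊆ T := hsupp.trans hT0T
  have hcard5 : @Fintype.card (Subtype (fun x => x ∈ T)) (Subtype.fintype _) = 5 := by
    have hinst : (Subtype.fintype (fun x => x ∈ T)) = Fintype.subtype T (fun _ => Iff.rfl) :=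
      Subsingleton.elim _ _
    rw [hinst, Fintype.subtype_card]
    exact hTcard
  refine threeCycle_aux (fun x => x ∈ T) hcard5 N hle hconj ρ hρN hρ1 ?_
  intro x hx
  by_contra hne
  exact hx (hTsupp (Equiv.Perm.mem_support.mpr hne))

/-- Key lemma: a nontrivial subgroup of `Perm (Fin n)` contained in the alternating group and
stable under conjugation by even permutations contains the alternating group, for `n = 3` or
`5 ≤ n`. -/
private lemma alt_le_of_conj {n : ℕ} (hn : n = 3 ∨ 5 ≤ n) (N : Subgroup (Perm (Fin n)))
    (hle : N ≤ alternatingGroup (Fin n))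
    (hconj : ∀ g ∈ alternatingGroup (Fin n), ∀ x ∈ N, g * x * g⁻¹ ∈ N)
    (hN : N ≠ ⊥) : alternatingGroup (Fin n) ≤ N := by
  have hNsub : (N.subgroupOf (alternatingGroup (Fin n))).Normal := by
    constructor
    rintro ⟨x, hxA⟩ hx ⟨g, hgA⟩
    rw [Subgroup.mem_subgroupOf] at hx ⊢
    simp only [Subgroup.coe_mul, InvMemClass.coe_inv]
    exact hconj g hgA x hx
  have hNsub_ne : N.subgroupOf (alternatingGroup (Fin n)) ≠ ⊥ := by
    intro h
    apply hN
    have hmap := congrArg (Subgroup.map (alternatingGroup (Fin n)).subtype) h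
    rw [Subgroup.subgroupOf_map_subtype, inf_eq_left.mpr hle] at hmap
    simpa using hmap
  have hdich : N.subgroupOf (alternatingGroup (Fin n)) = ⊥ ∨
      N.subgroupOf (alternatingGroup (Fin n)) = ⊤ := by
    rcases hn with rfl | h5
    · haveI : Fact (Nat.card ↥(alternatingGroup (Fin 3))).Prime := by
        constructor
        have h6 : 2 * Fintype.card ↥(alternatingGroup (Fin 3)) = 6 := by
          rw [two_mul_card_alternatingGroup, Fintype.card_perm, Fintype.card_fin]
          decide
        have h3 : Nat.card ↥(alternatingGroup (Fin 3)) = 3 := by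
          rw [Nat.card_eq_fintype_card]; omega
        rw [h3]
        exact Nat.prime_three
      exact Subgroup.eq_bot_or_eq_top_of_prime_card _
    · obtain ⟨f, hfN, hf3⟩ := exists_threeCycle_mem h5 N hle hconj hN
      right
      have hclos := hf3.alternating_normalClosure (by rw [Nat.card_fin]; exact h5)
      rw [eq_top_iff, ← hclos]
      refine Subgroup.normalClosure_le_normal ?_
      intro x hx
      rw [Set.mem_singleton_iff] at hx
      subst hx
      rw [SetLike.mem_coe, Subgroup.mem_subgroupOf]
      exact hfN
  rcases hdich with h | h
  · exact absurd h hNsub_ne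
  · exact Subgroup.subgroupOf_eq_top.mp h

private lemma normalCore_index_dvd {G : Type*} [Group G] [Finite G] (H : Subgroup G) :
    H.normalCore.index ∣ (H.index)! := by
  classical
  rw [Subgroup.normalCore_eq_ker, Subgroup.index_ker]
  have h1 : Nat.card (MulAction.toPermHom G (G ⧸ H)).range ∣ Nat.card (Perm (G ⧸ H)) :=
    Subgroup.card_subgroup_dvd_card _
  have h2 : Nat.card (Perm (G ⧸ H)) = (H.index)! := by
    haveI : Fintype (G ⧸ H) := Fintype.ofFinite _
    rw [Nat.card_eq_fintype_card, Fintype.card_perm, ← Nat.card_eq_fintype_card]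
    rfl
  rwa [h2] at h1

private lemma alt_index {n : ℕ} (h2 : 2 ≤ n) : (alternatingGroup (Fin n)).index = 2 := by
  haveI : Nontrivial (Fin n) := Fin.nontrivial_iff_two_le.mpr h2
  have hm := Subgroup.card_mul_index (alternatingGroup (Fin n))
  have h2m : 2 * Nat.card ↥(alternatingGroup (Fin n)) = Nat.card (Perm (Fin n)) := by
    rw [Nat.card_eq_fintype_card, Nat.card_eq_fintype_card]
    exact two_mul_card_alternatingGroup
  have hpos : 0 < Nat.card ↥(alternatingGroup (Fin n)) := Nat.card_pos
  rw [← h2m, mul_comm (Nat.card ↥(alternatingGroup (Fin n)))] at hm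
  exact Nat.eq_of_mul_eq_mul_right hpos hm

end Auxiliary

/-- Let `n` be a positive integer with `n ≠ 4`, and let `G` be either the symmetric group
`S_n` or the alternating group `A_n`. If `H` is a subgroup of `G` of index `m` with `m < n`,
then `H` equals `A_n` or `S_n`. -/
theorem stmt0 (n m : ℕ) (hn : 0 < n) (hn4 : n ≠ 4)
    (G H : Subgroup (Equiv.Perm (Fin n)))
    (hG : G = ⊤ ∨ G = alternatingGroup (Fin n))
    (hHG : H ≤ G) (hm : H.relIndex G = m) (hmn : m < n) :
    H = alternatingGroup (Fin n) ∨ H = ⊤ := by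
  classical
  have hm0 : m ≠ 0 := by
    rw [← hm]
    exact Subgroup.index_ne_zero_of_finite
  by_cases hn3 : n < 3
  · have hm1 : m = 1 := by omega
    rw [hm1] at hm
    have hGH : G ≤ H := Subgroup.relIndex_eq_one.mp hm
    have hHGeq : H = G := le_antisymm hHG hGH
    rcases hG with h | h
    · right; rw [hHGeq, h]
    · left; rw [hHGeq, h]
  push_neg at hn3
  have hn35 : n = 3 ∨ 5 ≤ n := by omega
  have hmn1 : m ≤ n - 1 := by omega
  have hfact : m ! ≤ (n - 1)! := Nat.factorial_le hmn1
  have hnn : n ! = n * (n - 1)! := by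
    cases n with
    | zero => omega
    | succ k => simp [Nat.factorial_succ]
  have hcardPerm : Nat.card (Perm (Fin n)) = n ! := by
    rw [Nat.card_eq_fintype_card, Fintype.card_perm, Fintype.card_fin]
  haveI : Nontrivial (Fin n) := Fin.nontrivial_iff_two_le.mpr (by omega)
  have h2alt : 2 * Nat.card ↥(alternatingGroup (Fin n)) = n ! := by
    rw [Nat.card_eq_fintype_card, two_mul_card_alternatingGroup, Fintype.card_perm,
      Fintype.card_fin]
  rcases hG with rfl | rfl
  · -- G = ⊤
    have hidx : H.index = m := by rw [← Subgroup.relIndex_top_right]; exact hm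
    have hcore := normalCore_index_dvd H
    rw [hidx] at hcore
    obtain ⟨K, hKdef⟩ : ∃ K, K = H.normalCore := ⟨_, rfl⟩
    have hKnormal : K.Normal := hKdef ▸ Subgroup.normalCore_normal H
    have hKindex : K.index ∣ m ! := hKdef ▸ hcore
    have hKindex_le : K.index ≤ (n - 1)! :=
      le_trans (Nat.le_of_dvd (Nat.factorial_pos m) hKindex) hfact
    have hKcard : Nat.card K * K.index = n ! := by rw [Subgroup.card_mul_index, hcardPerm]
    have hKcard_ge : n ≤ Nat.card K := by
      have h1 : n * (n - 1)! ≤ Nat.card K * (n - 1)! := by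
        calc n * (n - 1)! = n ! := hnn.symm
          _ = Nat.card K * K.index := hKcard.symm
          _ ≤ Nat.card K * (n - 1)! := Nat.mul_le_mul_left _ hKindex_le
      exact Nat.le_of_mul_le_mul_right h1 (Nat.factorial_pos _)
    obtain ⟨N, hNdef⟩ : ∃ N, N = K ⊓ alternatingGroup (Fin n) := ⟨_, rfl⟩
    have hNle : N ≤ alternatingGroup (Fin n) := hNdef ▸ inf_le_right
    have hNK : N ≤ K := hNdef ▸ inf_le_left
    have hconj : ∀ g ∈ alternatingGroup (Fin n), ∀ x ∈ N, g * x * g⁻¹ ∈ N := by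
      intro g hg x hx
      rw [hNdef, Subgroup.mem_inf] at hx ⊢
      constructor
      · exact hKnormal.conj_mem x hx.1 g
      · have hx2 := hx.2
        rw [Equiv.Perm.mem_alternatingGroup] at hx2 hg ⊢
        rw [map_mul, map_mul, map_inv, hg, hx2]
        norm_num
    have hNne : N ≠ ⊥ := by
      intro hbot
      have hinj : Function.Injective ((Perm.sign).comp K.subtype) := by
        rw [← MonoidHom.ker_eq_bot_iff]
        rw [eq_bot_iff]
        intro x hx
        rw [MonoidHom.mem_ker] at hx
        have hxalt : (x : Perm (Fin n)) ∈ alternatingGroup (Fin n) :=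
          Equiv.Perm.mem_alternatingGroup.mpr hx
        have : (x : Perm (Fin n)) ∈ N := hNdef ▸ Subgroup.mem_inf.mpr ⟨x.2, hxalt⟩
        rw [hbot, Subgroup.mem_bot] at this
        rw [Subgroup.mem_bot]
        exact Subtype.ext (by simpa using this)
      have hle2 : Nat.card K ≤ Nat.card ℤˣ := Nat.card_le_card_of_injective _ hinj
      have hu2 : Nat.card ℤˣ = 2 := by
        rw [Nat.card_eq_fintype_card, Fintype.card_units_int]
      rw [hu2] at hle2
      have h32 : (3 : ℕ) ≤ 2 := le_trans (le_trans hn3 hKcard_ge) hle2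
      omega
    have halt : alternatingGroup (Fin n) ≤ N := alt_le_of_conj hn35 N hNle hconj hNne
    have hAH : alternatingGroup (Fin n) ≤ H :=
      le_trans halt (le_trans hNK (hKdef ▸ Subgroup.normalCore_le H))
    have hidx2 : H.index ∣ 2 := by
      rw [← alt_index (n := n) (by omega)]
      exact Subgroup.index_dvd_of_le hAH
    rcases (Nat.dvd_prime Nat.prime_two).mp hidx2 with h1 | h2
    · right; exact Subgroup.index_eq_one.mp h1
    · left
      have hri := Subgroup.relIndex_mul_index hAH
      rw [h2, alt_index (n := n) (by omega)] at hri
      have hrel1 : (alternatingGroup (Fin n)).relIndex H = 1 := by omega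
      exact le_antisymm (Subgroup.relIndex_eq_one.mp hrel1) hAH
  · -- G = alternatingGroup
    have hidx : (H.subgroupOf (alternatingGroup (Fin n))).index = m := hm
    have hcore := normalCore_index_dvd (H.subgroupOf (alternatingGroup (Fin n)))
    rw [hidx] at hcore
    obtain ⟨D, hDdef⟩ : ∃ D, D = (H.subgroupOf (alternatingGroup (Fin n))).normalCore :=
      ⟨_, rfl⟩
    have hDnormal : D.Normal := hDdef ▸ Subgroup.normalCore_normal _
    have hDindex : D.index ∣ m ! := hDdef ▸ hcore
    have hDindex_le : D.index ≤ (n - 1)! :=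
      le_trans (Nat.le_of_dvd (Nat.factorial_pos m) hDindex) hfact
    obtain ⟨N, hNdef⟩ : ∃ N, N = D.map (alternatingGroup (Fin n)).subtype := ⟨_, rfl⟩
    have hNle : N ≤ alternatingGroup (Fin n) := hNdef ▸ Subgroup.map_subtype_le D
    have hconj : ∀ g ∈ alternatingGroup (Fin n), ∀ x ∈ N, g * x * g⁻¹ ∈ N := by
      intro g hg x hx
      rw [hNdef, Subgroup.mem_map] at hx ⊢
      obtain ⟨y, hy, rfl⟩ := hx
      refine ⟨(⟨g, hg⟩ : ↥(alternatingGroup (Fin n))) * y * (⟨g, hg⟩ : _)⁻¹,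
        hDnormal.conj_mem y hy _, ?_⟩
      simp
    have hNne : N ≠ ⊥ := by
      intro hbot
      rw [hNdef, Subgroup.map_eq_bot_iff_of_injective _ (Subgroup.subtype_injective _)] at hbot
      have hDidx : D.index = Nat.card ↥(alternatingGroup (Fin n)) := by
        rw [hbot, Subgroup.index_bot]
      have hcontr : n * (n - 1)! ≤ 2 * (n - 1)! := by
        calc n * (n - 1)! = n ! := hnn.symm
          _ = 2 * Nat.card ↥(alternatingGroup (Fin n)) := h2alt.symm
          _ = 2 * D.index := by rw [hDidx]
          _ ≤ 2 * (n - 1)! := Nat.mul_le_mul_left _ hDindex_le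
      have := Nat.le_of_mul_le_mul_right hcontr (Nat.factorial_pos _)
      omega
    have halt : alternatingGroup (Fin n) ≤ N := alt_le_of_conj hn35 N hNle hconj hNne
    have hNH : N ≤ H := by
      rw [hNdef]
      refine le_trans (Subgroup.map_mono (hDdef ▸ Subgroup.normalCore_le _)) ?_
      rw [Subgroup.subgroupOf_map_subtype]
      exact inf_le_left
    left
    exact le_antisymm hHG (le_trans halt hNH)
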